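/- Let X = {X_{k,n} : 1 ≤ k ≤ k(n), n ≥ 1} be an array of random variables on a common probability space with k(n) → ∞, such that for each n the variables X_{1,n}, …, X_{k(n),n} are independent and X_{k,n} follows the corrected geometric law G*(p_{k,n}) with 0 < p_{k,n} = 1 − q_{k,n} < 1. Assume: (GN2) sup_{1≤k≤k(n)} q_{k,n}/p_{k,n}² → 0; (GN3) for h ∈ {1,2}, Σ_{k=1}^{k(n)} q_{k,n}/p_{k,n}^h → λ for some λ ∈ (0,∞); (GN4) for every 0 < ε < 1, B(ε,n) = Σ_{k=1}^{k(n)} Σ_{j=0}^{∞} 1{|j − q_{k,n}/p_{k,n} − 1| ≥ ε} (j − q_{k,n}/p_{k,n})² p_{k,n} q_{k,n}^j → 0. Then S_n[X] = Σ_{k=1}^{k(n)} X_{k,n} converges in distribution to the Poisson law P(λ); equivalently, for every j ∈ ℕ, P(S_n[X] = j) → e^{−λ} λ^j / j!. -/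

import Mathlib

open MeasureTheory ProbabilityTheory Filter

open Finset

noncomputable def Hgeom (q : ℕ → ℝ) (K j : ℕ) : ℝ :=
  ∑ c ∈ Finset.piAntidiag (Finset.range K) j, ∏ k ∈ Finset.range K, q k ^ c k

noncomputable def Ngeom (q : ℕ → ℝ) (K j : ℕ) : ℝ :=
  ∑ c ∈ (Finset.piAntidiag (Finset.range K) j).filter
      (fun c => ∃ k ∈ Finset.range K, 2 ≤ c k),
    ∏ k ∈ Finset.range K, q k ^ c k

variable {q : ℕ → ℝ} {K j : ℕ}

lemma prodq_nonneg (hq : ∀ k < K, 0 ≤ q k) (c : ℕ → ℕ) :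
    0 ≤ ∏ k ∈ Finset.range K, q k ^ c k :=
  Finset.prod_nonneg fun k hk => pow_nonneg (hq k (Finset.mem_range.1 hk)) _

lemma Hgeom_nonneg (hq : ∀ k < K, 0 ≤ q k) : 0 ≤ Hgeom q K j :=
  Finset.sum_nonneg fun c _ => prodq_nonneg hq c

lemma Ngeom_nonneg (hq : ∀ k < K, 0 ≤ q k) : 0 ≤ Ngeom q K j :=
  Finset.sum_nonneg fun c _ => prodq_nonneg hq c

lemma Hgeom_le (hq : ∀ k < K, 0 ≤ q k) :
    Hgeom q K j ≤ (∑ k ∈ Finset.range K, q k) ^ j := by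
  rw [Finset.sum_pow_eq_sum_piAntidiag]
  refine Finset.sum_le_sum fun c _ => ?_
  have h1 : (1 : ℝ) ≤ (Nat.multinomial (Finset.range K) c : ℝ) := by
    exact_mod_cast Nat.one_le_iff_ne_zero.2 (Nat.multinomial_pos _ _).ne'
  calc ∏ k ∈ Finset.range K, q k ^ c k
      = 1 * ∏ k ∈ Finset.range K, q k ^ c k := (one_mul _).symm
    _ ≤ _ := mul_le_mul_of_nonneg_right h1 (prodq_nonneg hq c)

lemma pow_le_factorial_mul_Hgeom (hq : ∀ k < K, 0 ≤ q k) :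
    (∑ k ∈ Finset.range K, q k) ^ j ≤ (j.factorial : ℝ) * Hgeom q K j := by
  rw [Finset.sum_pow_eq_sum_piAntidiag, Hgeom, Finset.mul_sum]
  refine Finset.sum_le_sum fun c hc => ?_
  have hsum : ∑ i ∈ Finset.range K, c i = j := (Finset.mem_piAntidiag.1 hc).1
  have hm : Nat.multinomial (Finset.range K) c ≤ j.factorial := by
    rw [← hsum]
    exact Nat.le_of_dvd (Nat.factorial_pos _)
      ⟨∏ i ∈ Finset.range K, (c i).factorial, by
        rw [mul_comm]; exact (Nat.multinomial_spec _ _).symm⟩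
  exact mul_le_mul_of_nonneg_right (by exact_mod_cast hm) (prodq_nonneg hq c)

lemma factorial_mul_Hgeom_le (hq : ∀ k < K, 0 ≤ q k) :
    (j.factorial : ℝ) * Hgeom q K j ≤
      (∑ k ∈ Finset.range K, q k) ^ j + (j.factorial : ℝ) * Ngeom q K j := by
  classical
  rw [Finset.sum_pow_eq_sum_piAntidiag, Hgeom, Finset.mul_sum, Ngeom, Finset.mul_sum]
  set P : (ℕ → ℕ) → Prop := fun c => ∃ k ∈ Finset.range K, 2 ≤ c k with hP
  have hsplit := Finset.sum_filter_add_sum_filter_not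
    (Finset.piAntidiag (Finset.range K) j) P
    (fun c => (j.factorial : ℝ) * ∏ k ∈ Finset.range K, q k ^ c k)
  rw [← hsplit]
  have heq : ∀ c ∈ (Finset.piAntidiag (Finset.range K) j).filter (fun c => ¬ P c),
      (j.factorial : ℝ) * ∏ k ∈ Finset.range K, q k ^ c k
        = (Nat.multinomial (Finset.range K) c : ℝ) * ∏ k ∈ Finset.range K, q k ^ c k := by
    intro c hc
    rw [Finset.mem_filter] at hc
    obtain ⟨hc1, hc2⟩ := hc
    rw [Finset.mem_piAntidiag] at hc1
    have hle1 : ∀ i, c i ≤ 1 := by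
      intro i
      by_contra h
      exact hc2 ⟨i, hc1.2 i (by omega), by omega⟩
    have : Nat.multinomial (Finset.range K) c = j.factorial := by
      have hspec := Nat.multinomial_spec (Finset.range K) c
      have hone : ∏ i ∈ Finset.range K, (c i).factorial = 1 := by
        refine Finset.prod_eq_one fun i _ => ?_
        have h : c i = 0 ∨ c i = 1 := by have := hle1 i; omega
        rcases h with h | h <;> simp [h]
      rw [hone, one_mul, hc1.1] at hspec
      exact hspec
    rw [this]
  rw [add_comm, Finset.sum_congr rfl heq]
  exact add_le_add (Finset.sum_le_sum_of_subset_of_nonneg (Finset.filter_subset _ _)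
    (fun c _ _ => mul_nonneg (Nat.cast_nonneg _) (prodq_nonneg hq c))) le_rfl

lemma Ngeom_eq_zero (hj : j ≤ 1) : Ngeom q K j = 0 := by
  rw [Ngeom]
  convert Finset.sum_empty
  refine Finset.eq_empty_of_forall_notMem fun c hc => ?_
  rw [Finset.mem_filter] at hc
  obtain ⟨hc1, k, hk, hk2⟩ := hc
  rw [Finset.mem_piAntidiag] at hc1
  have hsum : ∑ i ∈ Finset.range K, c i = j := hc1.1
  have : c k ≤ ∑ i ∈ Finset.range K, c i :=
    Finset.single_le_sum (fun i _ => Nat.zero_le _) hk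
  omega

lemma Ngeom_le (hq : ∀ k < K, 0 ≤ q k) (hj : 2 ≤ j) :
    Ngeom q K j ≤ (∑ k ∈ Finset.range K, q k ^ 2) * Hgeom q K (j - 2) := by
  classical
  set src := (Finset.piAntidiag (Finset.range K) j).filter
      (fun c => ∃ k ∈ Finset.range K, 2 ≤ c k) with hsrc
  set tgt := (Finset.range K) ×ˢ Finset.piAntidiag (Finset.range K) (j - 2) with htgt
  set g : ℕ × (ℕ → ℕ) → ℝ := fun x => q x.1 ^ 2 * ∏ k ∈ Finset.range K, q k ^ x.2 k with hg
  set φ : (ℕ → ℕ) → ℕ × (ℕ → ℕ) :=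
    fun c => (sInf {k | 2 ≤ c k}, fun i => c i - if i = sInf {k | 2 ≤ c k} then 2 else 0)
    with hφ
  have hmem : ∀ c ∈ src, 2 ≤ c (sInf {k | 2 ≤ c k}) := by
    intro c hc
    rw [hsrc, Finset.mem_filter] at hc
    obtain ⟨-, k, -, hk2⟩ := hc
    exact Nat.sInf_mem (⟨k, hk2⟩ : {k | 2 ≤ c k}.Nonempty)
  have hdec : ∀ c ∈ src, ∀ i,
      c i = (φ c).2 i + (if i = (φ c).1 then 2 else 0) := by
    intro c hc i
    have h2 := hmem c hc
    by_cases h : i = sInf {k | 2 ≤ c k} <;> simp [hφ, h] <;> omega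
  have hφmem : ∀ c ∈ src, φ c ∈ tgt := by
    intro c hc
    have h2 := hmem c hc
    have hcp : c ∈ Finset.piAntidiag (Finset.range K) j :=
      Finset.mem_of_mem_filter _ hc
    rw [Finset.mem_piAntidiag] at hcp
    have hc1 : ∑ i ∈ Finset.range K, c i = j := hcp.1
    have hkmem : (φ c).1 ∈ Finset.range K := hcp.2 _ (by simp only [hφ]; omega)
    rw [htgt, Finset.mem_product]
    refine ⟨hkmem, ?_⟩
    rw [Finset.mem_piAntidiag]
    constructor
    · have hsum : ∑ i ∈ Finset.range K, c i
          = (∑ i ∈ Finset.range K, (φ c).2 i) + 2 := by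
        calc ∑ i ∈ Finset.range K, c i
            = ∑ i ∈ Finset.range K, ((φ c).2 i + if i = (φ c).1 then 2 else 0) :=
              Finset.sum_congr rfl fun i _ => hdec c hc i
          _ = (∑ i ∈ Finset.range K, (φ c).2 i)
              + ∑ i ∈ Finset.range K, (if i = (φ c).1 then 2 else 0) :=
              Finset.sum_add_distrib
          _ = _ := by
              rw [Finset.sum_ite_eq' (Finset.range K) (φ c).1 (fun _ => 2), if_pos hkmem]
      have : ∑ i ∈ Finset.range K, (φ c).2 i = j - 2 := by omega
      exact this
    · intro i hi
      exact hcp.2 i (by have := hdec c hc i; omega)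
  have hval : ∀ c ∈ src, (∏ k ∈ Finset.range K, q k ^ c k) = g (φ c) := by
    intro c hc
    have hcp : c ∈ Finset.piAntidiag (Finset.range K) j :=
      Finset.mem_of_mem_filter _ hc
    rw [Finset.mem_piAntidiag] at hcp
    have hc1 : ∑ i ∈ Finset.range K, c i = j := hcp.1
    have h2 := hmem c hc
    have hkmem : (φ c).1 ∈ Finset.range K := hcp.2 _ (by simp only [hφ]; omega)
    calc ∏ k ∈ Finset.range K, q k ^ c k
        = ∏ k ∈ Finset.range K,
            (q k ^ (φ c).2 k * q k ^ (if k = (φ c).1 then 2 else 0)) := by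
          refine Finset.prod_congr rfl fun k _ => ?_
          rw [← pow_add, ← hdec c hc k]
      _ = (∏ k ∈ Finset.range K, q k ^ (φ c).2 k)
          * ∏ k ∈ Finset.range K, q k ^ (if k = (φ c).1 then 2 else 0) :=
          Finset.prod_mul_distrib
      _ = (∏ k ∈ Finset.range K, q k ^ (φ c).2 k) * q (φ c).1 ^ 2 := by
          congr 1
          have : ∀ k, q k ^ (if k = (φ c).1 then 2 else 0)
              = (if k = (φ c).1 then q k ^ 2 else 1) := by
            intro k; split <;> simp
          rw [Finset.prod_congr rfl fun k _ => this k,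
            Finset.prod_ite_eq' (Finset.range K) (φ c).1 (fun k => q k ^ 2),
            if_pos hkmem]
      _ = g (φ c) := by rw [hg]; ring
  have hinj : ∀ c ∈ src, ∀ c' ∈ src, φ c = φ c' → c = c' := by
    intro c hc c' hc' h
    funext i
    rw [hdec c hc i, hdec c' hc' i, h]
  calc Ngeom q K j = ∑ c ∈ src, g (φ c) := Finset.sum_congr rfl hval
    _ = ∑ x ∈ src.image φ, g x := (Finset.sum_image hinj).symm
    _ ≤ ∑ x ∈ tgt, g x := by
        refine Finset.sum_le_sum_of_subset_of_nonneg ?_ fun x hx _ => ?_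
        · intro x hx
          obtain ⟨c, hc, rfl⟩ := Finset.mem_image.1 hx
          exact hφmem c hc
        · rw [htgt, Finset.mem_product] at hx
          exact mul_nonneg (pow_nonneg (hq _ (Finset.mem_range.1 hx.1)) _)
            (prodq_nonneg hq _)
    _ = (∑ k ∈ Finset.range K, q k ^ 2) * Hgeom q K (j - 2) := by
        rw [htgt, Finset.sum_product, Hgeom, Finset.sum_mul]
        refine Finset.sum_congr rfl fun k _ => ?_
        simp only [hg]
        exact (Finset.mul_sum _ _ _).symm

open MeasureTheory ProbabilityTheory

lemma prob_sum_eq {Ω : Type*} [MeasureSpace Ω] [IsProbabilityMeasure (ℙ : Measure Ω)]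
    (K : ℕ) (X : ℕ → Ω → ℕ) (hX : ∀ k, Measurable (X k))
    (hindep : iIndepFun
      (fun k : Fin K => X k) ℙ) (j : ℕ) :
    ℙ {ω | ∑ k ∈ Finset.range K, X k ω = j}
      = ∑ c ∈ Finset.piAntidiag (Finset.range K) j,
          ∏ k ∈ Finset.range K, ℙ {ω | X k ω = c k} := by
  classical
  have hset : {ω | ∑ k ∈ Finset.range K, X k ω = j}
      = ⋃ c ∈ Finset.piAntidiag (Finset.range K) j,
          ⋂ k ∈ Finset.range K, X k ⁻¹' {c k} := by
    ext ω
    simp only [Set.mem_setOf_eq, Set.mem_iUnion, Set.mem_iInter, Set.mem_preimage,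
      Set.mem_singleton_iff, exists_prop]
    constructor
    · intro h
      refine ⟨fun k => if k ∈ Finset.range K then X k ω else 0, ?_, ?_⟩
      · rw [Finset.mem_piAntidiag]
        refine ⟨?_, fun i hi => by by_contra h'; simp [h'] at hi⟩
        rw [← h]
        exact Finset.sum_congr rfl fun k hk => by simp [hk]
      · intro k hk; simp [hk]
    · rintro ⟨c, hc, hω⟩
      rw [← (Finset.mem_piAntidiag.1 hc).1]
      exact Finset.sum_congr rfl fun k hk => hω k hk
  have hmeas : ∀ c ∈ Finset.piAntidiag (Finset.range K) j,
      MeasurableSet (⋂ k ∈ Finset.range K, X k ⁻¹' {c k}) := by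
    intro c _
    exact MeasurableSet.biInter (Finset.range K).countable_toSet
      fun k _ => hX k (measurableSet_singleton _)
  have hdisj : Set.PairwiseDisjoint ↑(Finset.piAntidiag (Finset.range K) j)
      (fun c : ℕ → ℕ => ⋂ k ∈ Finset.range K, X k ⁻¹' {c k}) := by
    intro c hc c' hc' hne
    rw [Function.onFun, Set.disjoint_left]
    intro ω h1 h2
    simp only [Set.mem_iInter, Set.mem_preimage, Set.mem_singleton_iff] at h1 h2
    refine hne (funext fun i => ?_)
    by_cases h : i ∈ Finset.range K
    · rw [← h1 i h, ← h2 i h]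
    · rw [Finset.mem_coe, Finset.mem_piAntidiag] at hc hc'
      have e1 : c i = 0 := by by_contra h0; exact h (hc.2 i h0)
      have e2 : c' i = 0 := by by_contra h0; exact h (hc'.2 i h0)
      rw [e1, e2]
  rw [hset, measure_biUnion_finset hdisj hmeas]
  refine Finset.sum_congr rfl fun c _ => ?_
  have hint : (⋂ k ∈ Finset.range K, X k ⁻¹' {c k})
      = ⋂ i ∈ (Finset.univ : Finset (Fin K)), X (i : ℕ) ⁻¹' {c (i : ℕ)} := by
    ext ω
    simp only [Set.mem_iInter, Set.mem_preimage, Set.mem_singleton_iff]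
    exact ⟨fun h i _ => h i (Finset.mem_range.2 i.isLt),
      fun h k hk => h ⟨k, Finset.mem_range.1 hk⟩ (Finset.mem_univ _)⟩
  rw [hint, hindep.meas_biInter fun i _ => ⟨{c (i : ℕ)}, trivial, rfl⟩]
  rw [show (fun i : Fin K => ℙ (X (i : ℕ) ⁻¹' {c (i : ℕ)})) = fun i : Fin K =>
    ℙ {ω | X (i : ℕ) ω = c (i : ℕ)} from rfl]
  exact Fin.prod_univ_eq_prod_range (fun k => ℙ {ω | X k ω = c k}) K

open Filter


/-- For a by-row independent array of corrected geometric `G*(p k n)` random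
variables (`P(X = j) = p q^j`, `q = 1 - p`) with `k(n) → ∞`, assuming
(GN2) `sup_k q_{k,n}/p_{k,n}² → 0`, (GN3) `∑_k q_{k,n}/p_{k,n}^h → λ` for `h ∈ {1,2}`
with `λ > 0`, and (GN4) for every `0 < ε < 1`,
`B(ε,n) = ∑_k ∑_{j=0}^{∞} 1{|j - q_{k,n}/p_{k,n} - 1| ≥ ε} (j - q_{k,n}/p_{k,n})² p_{k,n}
q_{k,n}^j → 0`, the row sums converge in distribution to the Poisson law `P(λ)`. -/
theorem corrected_geometric_array_to_poisson_general
    {Ω : Type*} [MeasureSpace Ω] [IsProbabilityMeasure (ℙ : Measure Ω)]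
    (K : ℕ → ℕ) (hK : Tendsto K atTop atTop)
    (X : ℕ → ℕ → Ω → ℕ) (hX : ∀ n k, Measurable (X n k))
    (p q : ℕ → ℕ → ℝ) (hp : ∀ n k, k < K n → 0 < p n k ∧ p n k < 1)
    (hq : ∀ n k, q n k = 1 - p n k)
    (hindep : ∀ n, iIndepFun
      (fun k : Fin (K n) => X n k) ℙ)
    (hlaw : ∀ n, ∀ k < K n, ∀ j : ℕ,
      (ℙ {ω | X n k ω = j}).toReal = p n k * q n k ^ j)
    (hGN2 : ∀ ε > (0 : ℝ), ∀ᶠ n in atTop, ∀ k < K n, q n k / p n k ^ 2 < ε)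
    (lam : ℝ) (hlam : 0 < lam)
    (hGN3a : Tendsto (fun n => ∑ k ∈ Finset.range (K n), q n k / p n k)
      atTop (nhds lam))
    (hGN3b : Tendsto (fun n => ∑ k ∈ Finset.range (K n), q n k / p n k ^ 2)
      atTop (nhds lam))
    (hGN4 : ∀ ε : ℝ, 0 < ε → ε < 1 →
      Tendsto (fun n => ∑ k ∈ Finset.range (K n), ∑' j : ℕ,
        (if ε ≤ |(j : ℝ) - q n k / p n k - 1| then 1 else 0) *
          ((j : ℝ) - q n k / p n k) ^ 2 * p n k * q n k ^ j)
        atTop (nhds 0)) :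
    ∀ j : ℕ, Tendsto
      (fun n => (ℙ {ω | ∑ k ∈ Finset.range (K n), X n k ω = j}).toReal) atTop
      (nhds (Real.exp (-lam) * lam ^ j / j.factorial)) := by
  intro j
  -- basic positivity facts
  have hp0 : ∀ n, ∀ k < K n, 0 < p n k := fun n k h => (hp n k h).1
  have hq0 : ∀ n, ∀ k < K n, 0 ≤ q n k := fun n k h => by
    rw [hq]; linarith [(hp n k h).2]
  have hqp : ∀ n, ∀ k < K n, 0 ≤ q n k / p n k :=
    fun n k h => div_nonneg (hq0 n k h) (hp0 n k h).le
  have hqled : ∀ n, ∀ k < K n, q n k ≤ q n k / p n k := by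
    intro n k h
    rw [le_div_iff₀ (hp0 n k h)]
    nlinarith [hq0 n k h, (hp n k h).2]
  -- the key probabilistic identity
  have key : ∀ n, (ℙ {ω | ∑ k ∈ Finset.range (K n), X n k ω = j}).toReal
      = (∏ k ∈ Finset.range (K n), p n k) * Hgeom (q n) (K n) j := by
    intro n
    rw [prob_sum_eq (K n) (X n) (hX n) (hindep n) j]
    have hne : ∀ c ∈ Finset.piAntidiag (Finset.range (K n)) j,
        (∏ k ∈ Finset.range (K n), ℙ {ω | X n k ω = c k}) ≠ ⊤ :=
      fun c _ => (ENNReal.prod_lt_top (fun k _ => measure_lt_top _ _)).ne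
    rw [ENNReal.toReal_sum hne, Hgeom, Finset.mul_sum]
    refine Finset.sum_congr rfl fun c _ => ?_
    rw [ENNReal.toReal_prod,
      Finset.prod_congr rfl (fun k hk => hlaw n k (Finset.mem_range.1 hk) (c k)),
      Finset.prod_mul_distrib]
  set A : ℕ → ℝ := fun n => ∑ k ∈ Finset.range (K n), q n k / p n k with hA
  set L : ℕ → ℝ := fun n => ∑ k ∈ Finset.range (K n), q n k with hL
  set S2 : ℕ → ℝ := fun n => ∑ k ∈ Finset.range (K n), q n k ^ 2 with hS2def
  have hqlt : ∀ ε > (0:ℝ), ∀ᶠ n in atTop, ∀ k < K n, q n k < ε := by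
    intro ε hε
    filter_upwards [hGN2 ε hε] with n hn k hk
    have h1 := hn k hk
    have hp1 := hp n k hk
    have h2 : q n k ≤ q n k / p n k ^ 2 := by
      rw [le_div_iff₀ (pow_pos hp1.1 2)]
      calc q n k * p n k ^ 2 ≤ q n k * 1 :=
            mul_le_mul_of_nonneg_left (by nlinarith [hp1.1, hp1.2]) (hq0 n k hk)
        _ = q n k := mul_one _
    linarith
  have hAnn : ∀ n, 0 ≤ A n :=
    fun n => Finset.sum_nonneg fun k hk => hqp n k (Finset.mem_range.1 hk)
  have hLnn : ∀ n, 0 ≤ L n :=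
    fun n => Finset.sum_nonneg fun k hk => hq0 n k (Finset.mem_range.1 hk)
  have hLleA : ∀ n, L n ≤ A n :=
    fun n => Finset.sum_le_sum fun k hk => hqled n k (Finset.mem_range.1 hk)
  have hAub : ∀ᶠ n in atTop, A n < lam + 1 :=
    hGN3a.eventually_lt_const (by linarith)
  have hAL : Tendsto (fun n => A n - L n) atTop (nhds 0) := by
    rw [NormedAddCommGroup.tendsto_nhds_zero]
    intro ε hε
    have hl2 : (0:ℝ) < lam + 2 := by linarith
    have hε' : 0 < ε / (lam + 2) := by positivity
    filter_upwards [hqlt (ε / (lam + 2)) hε', hAub] with n h1 h2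
    have h3 : A n - L n ≤ (ε / (lam + 2)) * A n := by
      rw [hA, hL, ← Finset.sum_sub_distrib]
      refine le_trans (Finset.sum_le_sum fun k hk => ?_) (by rw [← Finset.mul_sum])
      have hk' := Finset.mem_range.1 hk
      have hpne : p n k ≠ 0 := (hp0 n k hk').ne'
      have e : q n k / p n k - q n k = (q n k / p n k) * (1 - p n k) := by
        field_simp
      rw [e, ← hq n k, mul_comm _ (q n k)]
      exact mul_le_mul_of_nonneg_right (h1 k hk').le (hqp n k hk')
    have h4 : 0 ≤ A n - L n := by linarith [hLleA n]
    rw [Real.norm_eq_abs, abs_of_nonneg h4]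
    calc A n - L n ≤ (ε / (lam + 2)) * A n := h3
      _ < (ε / (lam + 2)) * (lam + 2) := by
          exact mul_lt_mul_of_pos_left (by linarith) hε'
      _ = ε := by field_simp
  have hLlim : Tendsto L atTop (nhds lam) := by
    have h := hGN3a.sub hAL
    have heq : (fun n => A n - (A n - L n)) = L := by funext n; ring
    rw [heq] at h
    simpa using h
  have hS2lim : Tendsto S2 atTop (nhds 0) := by
    rw [NormedAddCommGroup.tendsto_nhds_zero]
    intro ε hε
    have hl2 : (0:ℝ) < lam + 2 := by linarith
    have hε' : 0 < ε / (lam + 2) := by positivity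
    filter_upwards [hqlt (ε / (lam + 2)) hε', hAub] with n h1 h2
    have h3 : S2 n ≤ (ε / (lam + 2)) * A n := by
      rw [hS2def, hA]
      refine le_trans (Finset.sum_le_sum fun k hk => ?_) (by rw [← Finset.mul_sum])
      have hk' := Finset.mem_range.1 hk
      have h5 : q n k ^ 2 ≤ (ε / (lam + 2)) * q n k := by
        nlinarith [hq0 n k hk', h1 k hk']
      exact h5.trans (mul_le_mul_of_nonneg_left (hqled n k hk') hε'.le)
    have h4 : 0 ≤ S2 n := Finset.sum_nonneg fun k _ => sq_nonneg _
    rw [Real.norm_eq_abs, abs_of_nonneg h4]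
    calc S2 n ≤ (ε / (lam + 2)) * A n := h3
      _ < (ε / (lam + 2)) * (lam + 2) := mul_lt_mul_of_pos_left (by linarith) hε'
      _ = ε := by field_simp
  -- the product of the p's converges to exp(-lam)
  have hPi : Tendsto (fun n => ∏ k ∈ Finset.range (K n), p n k) atTop
      (nhds (Real.exp (-lam))) := by
    have hlow : ∀ n, Real.exp (-A n) ≤ ∏ k ∈ Finset.range (K n), p n k := by
      intro n
      have e : Real.exp (-A n)
          = ∏ k ∈ Finset.range (K n), Real.exp (-(q n k / p n k)) := by
        rw [← Real.exp_sum]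
        congr 1
        rw [hA, ← Finset.sum_neg_distrib]
      rw [e]
      refine Finset.prod_le_prod (fun k _ => (Real.exp_pos _).le) (fun k hk => ?_)
      have hk' := Finset.mem_range.1 hk
      have hp1 := hp n k hk'
      have h1 : 1 / p n k ≤ Real.exp (q n k / p n k) := by
        have h2 := Real.add_one_le_exp (q n k / p n k)
        have hpne : p n k ≠ 0 := hp1.1.ne'
        have e2 : q n k / p n k + 1 = 1 / p n k := by
          rw [hq n k]; field_simp; ring
        linarith
      rw [Real.exp_neg]
      have h3 : (Real.exp (q n k / p n k))⁻¹ ≤ (1 / p n k)⁻¹ :=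
        inv_anti₀ (one_div_pos.2 hp1.1) h1
      rwa [one_div, inv_inv] at h3
    have hupp : ∀ n, (∏ k ∈ Finset.range (K n), p n k) ≤ Real.exp (-L n) := by
      intro n
      have e : Real.exp (-L n)
          = ∏ k ∈ Finset.range (K n), Real.exp (-(q n k)) := by
        rw [← Real.exp_sum]
        congr 1
        rw [hL, ← Finset.sum_neg_distrib]
      rw [e]
      refine Finset.prod_le_prod (fun k hk => (hp0 n k (Finset.mem_range.1 hk)).le)
        (fun k hk => ?_)
      have h2 := Real.add_one_le_exp (-(q n k))
      have h3 := hq n k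
      linarith
    have t1 : Tendsto (fun n => Real.exp (-A n)) atTop (nhds (Real.exp (-lam))) :=
      (Real.continuous_exp.tendsto _).comp hGN3a.neg
    have t2 : Tendsto (fun n => Real.exp (-L n)) atTop (nhds (Real.exp (-lam))) :=
      (Real.continuous_exp.tendsto _).comp hLlim.neg
    exact tendsto_of_tendsto_of_tendsto_of_le_of_le t1 t2 hlow hupp
  -- Hgeom converges to lam ^ j / j!
  have hfac : (0:ℝ) < j.factorial := by exact_mod_cast j.factorial_pos
  have hH : Tendsto (fun n => Hgeom (q n) (K n) j) atTop
      (nhds (lam ^ j / j.factorial)) := by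
    have hlow : ∀ n, L n ^ j / j.factorial ≤ Hgeom (q n) (K n) j := by
      intro n
      rw [div_le_iff₀ hfac, mul_comm]
      exact pow_le_factorial_mul_Hgeom (hq0 n)
    have hupp : ∀ n, Hgeom (q n) (K n) j
        ≤ L n ^ j / j.factorial + Ngeom (q n) (K n) j := by
      intro n
      rw [← mul_le_mul_iff_of_pos_left hfac]
      calc (j.factorial:ℝ) * Hgeom (q n) (K n) j
          ≤ L n ^ j + j.factorial * Ngeom (q n) (K n) j :=
            factorial_mul_Hgeom_le (hq0 n)
        _ = j.factorial * (L n ^ j / j.factorial + Ngeom (q n) (K n) j) := by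
            rw [mul_add, mul_div_cancel₀ _ hfac.ne']
    have hN : Tendsto (fun n => Ngeom (q n) (K n) j) atTop (nhds 0) := by
      rcases le_or_gt j 1 with hj | hj
      · have e : (fun n => Ngeom (q n) (K n) j) = fun _ => (0:ℝ) :=
          funext fun n => Ngeom_eq_zero hj
        rw [e]; exact tendsto_const_nhds
      · have hj2 : 2 ≤ j := hj
        have hg : Tendsto (fun n => S2 n * L n ^ (j - 2)) atTop (nhds 0) := by
          have h := hS2lim.mul (hLlim.pow (j - 2))
          simpa using h
        refine squeeze_zero (fun n => Ngeom_nonneg (hq0 n)) (fun n => ?_) hg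
        calc Ngeom (q n) (K n) j ≤ S2 n * Hgeom (q n) (K n) (j - 2) :=
            Ngeom_le (hq0 n) hj2
          _ ≤ S2 n * L n ^ (j - 2) :=
            mul_le_mul_of_nonneg_left (Hgeom_le (hq0 n))
              (Finset.sum_nonneg fun k _ => sq_nonneg _)
    have hlim1 : Tendsto (fun n => L n ^ j / j.factorial) atTop
        (nhds (lam ^ j / j.factorial)) := (hLlim.pow j).div_const _
    have hlim2 : Tendsto (fun n => L n ^ j / j.factorial + Ngeom (q n) (K n) j)
        atTop (nhds (lam ^ j / j.factorial)) := by
      have h := hlim1.add hN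
      simpa using h
    exact tendsto_of_tendsto_of_tendsto_of_le_of_le hlim1 hlim2 hlow hupp
  have hfin := hPi.mul hH
  rw [show Real.exp (-lam) * lam ^ j / (j.factorial:ℝ)
    = Real.exp (-lam) * (lam ^ j / j.factorial) from mul_div_assoc _ _ _]
  exact Tendsto.congr (fun n => (key n).symm) hfin
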